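/- Let T be a finitely branching rooted tree with root the empty sequence, equipped with the tree metric. Then σ(T, root), the set of σ-equivalence classes of coarse sequences in (T, root), is equipotent to [T], the set of infinite branches of T. -/

import Mathlib

open Filter

/-- The length of the longest common prefix of two lists. -/
def commonPrefixLen : List ℕ → List ℕ → ℕ
  | a :: s, b :: t => if a = b then commonPrefixLen s t + 1 else 0
  | _, _ => 0

/-- The tree metric on finite sequences: `d(s,t) = |s| + |t| - 2ℓ` where `ℓ` is the
length of the longest common prefix of `s` and `t`. -/
def treeDist (s t : List ℕ) : ℕ :=
  s.length + t.length - 2 * commonPrefixLen s t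

/-- A rooted tree: a set of finite sequences containing the empty sequence and
closed under prefixes. -/
def IsTree (T : Set (List ℕ)) : Prop :=
  [] ∈ T ∧ ∀ l ∈ T, ∀ l' : List ℕ, l' <+: l → l' ∈ T

/-- A tree is finitely branching if every node has only finitely many one-step
extensions in the tree. -/
def FinitelyBranching (T : Set (List ℕ)) : Prop :=
  ∀ l ∈ T, {n : ℕ | l ++ [n] ∈ T}.Finite

/-- `[T]`: the set of infinite branches of `T`. -/
def Branch (T : Set (List ℕ)) :=
  {f : ℕ → ℕ // ∀ n : ℕ, (List.ofFn fun i : Fin n => f i.1) ∈ T}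

/-- A coarse sequence in the pointed metric space `(T, root)`: a sequence of nodes of
`T` with uniformly bounded consecutive steps that diverges from the root to infinity. -/
def IsCoarseSeqT (T : Set (List ℕ)) (s : ℕ → List ℕ) : Prop :=
  (∀ i : ℕ, s i ∈ T) ∧
  (∃ K : ℝ, ∀ i : ℕ, (treeDist (s i) (s (i + 1)) : ℝ) ≤ K) ∧
  Tendsto (fun i => treeDist [] (s i)) atTop atTop

/-- `s` is a subsequence of `t`. -/
def IsSubseq {X : Type*} (s t : ℕ → X) : Prop :=
  ∃ k : ℕ → ℕ, StrictMono k ∧ ∀ i, s i = t (k i)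

/-- σ-equivalence of coarse sequences in `(T, root)`. -/
def SigmaRelT (T : Set (List ℕ)) (s t : ℕ → List ℕ) : Prop :=
  ∃ (n : ℕ) (u : ℕ → ℕ → List ℕ), u 0 = s ∧ u n = t ∧ (∀ i ≤ n, IsCoarseSeqT T (u i)) ∧
    ∀ i < n, IsSubseq (u i) (u (i + 1)) ∨ IsSubseq (u (i + 1)) (u i)

/-- `x` and `y` are connected inside `A` by a finite chain with steps of tree
distance `≤ K`. -/
def ChainT (K : ℝ) (A : Set (List ℕ)) (x y : List ℕ) : Prop :=
  ∃ (n : ℕ) (c : ℕ → List ℕ), c 0 = x ∧ c n = y ∧ (∀ i ≤ n, c i ∈ A) ∧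
    ∀ i < n, (treeDist (c i) (c (i + 1)) : ℝ) ≤ K

/-- ε-equivalence of coarse sequences in `(T, root)`: there is `K > 0` such that for
every `r > 0` there is `N` with the tails of `s` and `t` lying in the same
`K`-connected component of `T \ {x : d(root, x) ≤ r}`. -/
def EpsRelT (T : Set (List ℕ)) (s t : ℕ → List ℕ) : Prop :=
  ∃ K > (0 : ℝ), ∀ r > (0 : ℝ), ∃ N : ℕ,
    ∀ x ∈ (s '' {i | N ≤ i}) ∪ (t '' {i | N ≤ i}),
    ∀ y ∈ (s '' {i | N ≤ i}) ∪ (t '' {i | N ≤ i}),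
      ChainT K {l : List ℕ | l ∈ T ∧ r < (treeDist [] l : ℝ)} x y

/-- The set of coarse sequences in `(T, root)`. -/
def CoarseSeqT (T : Set (List ℕ)) := {s : ℕ → List ℕ // IsCoarseSeqT T s}

/-- `σ(T, root)`: the quotient of the set of coarse sequences by σ-equivalence. -/
def SigmaQuotT (T : Set (List ℕ)) :=
  Quot (fun s t : CoarseSeqT T => SigmaRelT T s.1 t.1)

/-- `ε(T, root)`: the quotient of the set of coarse sequences by ε-equivalence. -/
def EpsQuotT (T : Set (List ℕ)) :=
  Quot (fun s t : CoarseSeqT T => EpsRelT T s.1 t.1)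

lemma cpl_le_left : ∀ s t : List ℕ, commonPrefixLen s t ≤ s.length
  | a :: s, b :: t => by
    simp only [commonPrefixLen]
    split
    · simpa using cpl_le_left s t
    · simp
  | [], t => by simp [commonPrefixLen]
  | a :: s, [] => by simp [commonPrefixLen]

lemma cpl_comm : ∀ s t : List ℕ, commonPrefixLen s t = commonPrefixLen t s
  | a :: s, b :: t => by
    simp only [commonPrefixLen]
    rcases eq_or_ne a b with h | h
    · simp [h, cpl_comm s t]
    · simp [h, Ne.symm h]
  | [], [] => rfl
  | [], a :: t => by simp [commonPrefixLen]
  | a :: s, [] => by simp [commonPrefixLen]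

lemma cpl_le_right (s t : List ℕ) : commonPrefixLen s t ≤ t.length := by
  rw [cpl_comm]; exact cpl_le_left t s

lemma take_cpl : ∀ s t : List ℕ, s.take (commonPrefixLen s t) = t.take (commonPrefixLen s t)
  | a :: s, b :: t => by
    simp only [commonPrefixLen]
    split
    · next h => simp [h, take_cpl s t]
    · simp
  | [], t => by simp [commonPrefixLen]
  | a :: s, [] => by simp [commonPrefixLen]

lemma le_cpl : ∀ (s t : List ℕ) (n : ℕ), s.take n = t.take n → n ≤ s.length →
    n ≤ commonPrefixLen s t
  | a :: s, b :: t, n + 1, h, hn => by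
    simp only [List.take_succ_cons] at h
    rw [List.cons.injEq] at h
    obtain ⟨rfl, h⟩ := h
    simp only [commonPrefixLen, if_pos rfl, if_true]
    have := le_cpl s t n h (by simpa using Nat.succ_le_succ_iff.mp hn)
    omega
  | s, t, 0, _, _ => Nat.zero_le _
  | [], t, n + 1, h, hn => by simp at hn
  | a :: s, [], n + 1, h, hn => by simp at h

lemma take_eq_of_le_cpl {s t : List ℕ} {n : ℕ} (h : n ≤ commonPrefixLen s t) :
    s.take n = t.take n := by
  have := take_cpl s t
  have h1 : s.take n = (s.take (commonPrefixLen s t)).take n := by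
    rw [List.take_take, Nat.min_eq_left h]
  rw [h1, this, List.take_take, Nat.min_eq_left h]
/-- prefix of a branch -/
def pfx (f : ℕ → ℕ) (n : ℕ) : List ℕ := List.ofFn fun i : Fin n => f i.1

@[simp] lemma length_pfx (f : ℕ → ℕ) (n : ℕ) : (pfx f n).length = n := by
  simp [pfx]

lemma getElem_pfx (f : ℕ → ℕ) (n i : ℕ) (h : i < n) :
    (pfx f n)[i]'(by simp [h]) = f i := by
  simp [pfx]

lemma take_pfx (f : ℕ → ℕ) (a b : ℕ) (h : b ≤ a) : (pfx f a).take b = pfx f b := by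
  apply List.ext_getElem
  · simp [List.length_take, h]
  · intro i h1 h2
    have hia : i < a := by simp [List.length_take] at h1; omega
    rw [List.getElem_take]
    rw [getElem_pfx f a i hia, getElem_pfx f b i (by simpa using h2)]

lemma cpl_pfx_of_take {x : List ℕ} {f : ℕ → ℕ} {n m : ℕ} (hn : x.take n = pfx f n)
    (hm : n ≤ m) (hmx : m ≤ x.length) : n ≤ commonPrefixLen x (pfx f m) := by
  apply le_cpl
  · rw [take_pfx f m n hm, hn]
  · have := congrArg List.length hn
    simp [List.length_take] at this
    omega

lemma take_len_of_take_eq_pfx {x : List ℕ} {f : ℕ → ℕ} {n : ℕ} (hn : x.take n = pfx f n) :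
    n ≤ x.length := by
  have := congrArg List.length hn
  simp [List.length_take] at this
  omega

/-- agreement depth of a list with a branch -/
def agree (f : ℕ → ℕ) (x : List ℕ) : ℕ := commonPrefixLen x (pfx f x.length)

lemma agree_le_length (f : ℕ → ℕ) (x : List ℕ) : agree f x ≤ x.length :=
  cpl_le_left _ _

lemma take_agree (f : ℕ → ℕ) (x : List ℕ) : x.take (agree f x) = pfx f (agree f x) := by
  have h := take_eq_of_le_cpl (le_refl (commonPrefixLen x (pfx f x.length)))
  rw [agree]
  rw [h, take_pfx _ _ _ (cpl_le_right _ _ |>.trans (by simp))]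

lemma le_agree {f : ℕ → ℕ} {x : List ℕ} {n : ℕ} (h : x.take n = pfx f n) :
    n ≤ agree f x :=
  cpl_pfx_of_take h (take_len_of_take_eq_pfx h) le_rfl

lemma take_eq_pfx_of_le_agree {f : ℕ → ℕ} {x : List ℕ} {n : ℕ} (h : n ≤ agree f x) :
    x.take n = pfx f n := by
  have := take_agree f x
  calc x.take n = (x.take (agree f x)).take n := by rw [List.take_take, Nat.min_eq_left h]
  _ = (pfx f (agree f x)).take n := by rw [this]
  _ = pfx f n := take_pfx _ _ _ h

/-- the min-lemma: agreement with f transfers through common prefixes -/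
lemma agree_min {f : ℕ → ℕ} (x y : List ℕ) :
    min (agree f x) (commonPrefixLen x y) ≤ agree f y := by
  set n := min (agree f x) (commonPrefixLen x y) with hn
  apply le_agree (f := f) (x := y) (n := n)
  have h1 : y.take n = x.take n := by
    have := take_eq_of_le_cpl (s := x) (t := y) (n := n) (min_le_right _ _)
    exact this.symm
  rw [h1]
  exact take_eq_pfx_of_le_agree (min_le_left _ _)

/- treeDist lemmas -/
lemma treeDist_nil (l : List ℕ) : treeDist [] l = l.length := by
  have : commonPrefixLen [] l = 0 := by cases l <;> rfl
  simp [treeDist, this]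

lemma treeDist_le_iff {x y : List ℕ} {K : ℕ} :
    treeDist x y ≤ K ↔ x.length + y.length ≤ K + 2 * commonPrefixLen x y := by
  rw [treeDist]; omega

lemma cpl_ge_of_treeDist_le {x y : List ℕ} {K : ℕ} (h : treeDist x y ≤ K) :
    x.length ≤ commonPrefixLen x y + K := by
  have h1 := cpl_le_right x y
  rw [treeDist] at h
  omega

lemma treeDist_pfx_pfx (f : ℕ → ℕ) (a b : ℕ) (h : a ≤ b) :
    treeDist (pfx f a) (pfx f b) = b - a := by
  have hc : commonPrefixLen (pfx f a) (pfx f b) = a := by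
    apply le_antisymm
    · simpa using cpl_le_left (pfx f a) (pfx f b)
    · apply le_cpl
      · rw [List.take_of_length_le (by simp), take_pfx f b a h]
      · simp
  rw [treeDist, hc]; simp; omega

lemma treeDist_pfx_right {x : List ℕ} {f : ℕ → ℕ} {n : ℕ} (h : n ≤ agree f x) :
    treeDist x (pfx f n) = x.length - n := by
  have hc : commonPrefixLen x (pfx f n) = n := by
    apply le_antisymm
    · simpa using cpl_le_right x (pfx f n)
    · apply le_cpl
      · rw [take_eq_pfx_of_le_agree h, List.take_of_length_le (by simp)]
      · exact h.trans (agree_le_length f x)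
  rw [treeDist, hc]; simp; omega
/-- `f` is the limit branch of `s`. -/
def Limits (s : ℕ → List ℕ) (f : ℕ → ℕ) : Prop :=
  ∀ n, ∃ N, ∀ j ≥ N, (s j).take n = pfx f n

section CoarseBasic

variable {T : Set (List ℕ)} {s : ℕ → List ℕ}

/-- natural-number step bound for a coarse sequence, at least 1 -/
lemma exists_nat_bound (hs : IsCoarseSeqT T s) :
    ∃ K : ℕ, 1 ≤ K ∧ ∀ i, treeDist (s i) (s (i + 1)) ≤ K := by
  obtain ⟨-, ⟨K₀, hK₀⟩, -⟩ := hs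
  refine ⟨max ⌈K₀⌉₊ 1, le_max_right _ _, fun i => ?_⟩
  have h1 : (treeDist (s i) (s (i + 1)) : ℝ) ≤ (⌈K₀⌉₊ : ℝ) := (hK₀ i).trans (Nat.le_ceil _)
  have h2 : treeDist (s i) (s (i + 1)) ≤ ⌈K₀⌉₊ := by exact_mod_cast h1
  exact h2.trans (le_max_left _ _)

lemma length_tendsto (hs : IsCoarseSeqT T s) (R : ℕ) :
    ∃ N, ∀ j ≥ N, R ≤ (s j).length := by
  obtain ⟨-, -, ht⟩ := hs
  obtain ⟨N, hN⟩ := (ht.eventually_ge_atTop R).exists_forall_of_atTop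
  exact ⟨N, fun j hj => by simpa [treeDist_nil] using hN j hj⟩

/-- stabilization: takes of coarse sequences stabilize -/
lemma take_stab (hs : IsCoarseSeqT T s) (n : ℕ) :
    ∃ N, ∀ j ≥ N, (s j).take n = (s N).take n ∧ n ≤ (s j).length := by
  obtain ⟨K, hK1, hK⟩ := exists_nat_bound hs
  obtain ⟨N, hN⟩ := length_tendsto hs (n + K)
  refine ⟨N, fun j hj => ?_⟩
  constructor
  · have key : ∀ m, (s (N + m)).take n = (s N).take n := by
      intro m
      induction m with
      | zero => rfl
      | succ m ih =>
        have h1 : n + K ≤ (s (N + m)).length := hN _ (by omega)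
        have h2 : n + K ≤ (s (N + m + 1)).length := hN _ (by omega)
        have h3 := cpl_ge_of_treeDist_le (hK (N + m))
        have hc : n ≤ commonPrefixLen (s (N + m)) (s (N + m + 1)) := by omega
        have := take_eq_of_le_cpl hc
        rw [← Nat.add_assoc] at *
        calc (s (N + m + 1)).take n = (s (N + m)).take n := this.symm
          _ = (s N).take n := ih
    obtain ⟨m, rfl⟩ := Nat.exists_eq_add_of_le hj
    exact key m
  · exact le_trans (Nat.le_add_right n K) (hN j hj)

/-- existence of the limit branch -/
lemma exists_limits (hs : IsCoarseSeqT T s) : ∃ f, Limits s f := by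
  classical
  choose J hJ using take_stab hs
  set f : ℕ → ℕ := fun n => (s (J (n + 1))).getD n 0 with hf
  refine ⟨f, fun n => ?_⟩
  refine ⟨(Finset.range (n + 1)).sup J, fun j hj => ?_⟩
  have hjn : ∀ k ≤ n, J k ≤ j :=
    fun k hk => le_trans (Finset.le_sup (Finset.mem_range.mpr (Nat.lt_succ_of_le hk))) hj
  apply List.ext_getElem
  · have := (hJ n j (hjn n le_rfl)).2
    simp [List.length_take, this]
  · intro i h1 h2
    have hin : i < n := by simpa using h2
    rw [List.getElem_take, getElem_pfx f n i hin]
    -- f i = (s (J (i+1))).getD i 0 ; and take (i+1) agree between j and J (i+1)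
    have hji : J (i + 1) ≤ j := hjn (i + 1) hin
    have e1 := (hJ (i + 1) j hji).1
    have e2 := (hJ (i + 1) (J (i + 1)) le_rfl).1
    have e3 : (s j).take (i + 1) = (s (J (i + 1))).take (i + 1) := by rw [e1, e2]
    have hlen1 : i + 1 ≤ (s j).length := (hJ (i + 1) j hji).2
    have hlen2 : i + 1 ≤ (s (J (i + 1))).length := (hJ (i + 1) (J (i + 1)) le_rfl).2
    have : (s j)[i]'(by omega) = (s (J (i + 1)))[i]'(by omega) := by
      have g1 : ((s j).take (i + 1))[i]'(by simp [List.length_take]; omega) =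
          ((s (J (i + 1))).take (i + 1))[i]'(by simp [List.length_take]; omega) := by
        simp only [e3]
      rwa [List.getElem_take, List.getElem_take] at g1
    rw [this, hf]
    exact (List.getD_eq_getElem _ 0 (by omega)).symm

lemma limits_unique {f f' : ℕ → ℕ} (h : Limits s f) (h' : Limits s f') : f = f' := by
  funext n
  obtain ⟨N, hN⟩ := h (n + 1)
  obtain ⟨N', hN'⟩ := h' (n + 1)
  have e : pfx f (n + 1) = pfx f' (n + 1) := by
    rw [← hN (max N N') (le_max_left _ _), ← hN' (max N N') (le_max_right _ _)]
  have h1 : (pfx f (n + 1))[n]'(by simp) = (pfx f' (n + 1))[n]'(by simp) := by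
    simp only [e]
  rwa [getElem_pfx _ _ _ (by omega), getElem_pfx _ _ _ (by omega)] at h1

lemma limits_subseq {t : ℕ → List ℕ} {f : ℕ → ℕ} (hsub : IsSubseq s t) (h : Limits t f) :
    Limits s f := by
  obtain ⟨k, hk, hks⟩ := hsub
  intro n
  obtain ⟨N, hN⟩ := h n
  exact ⟨N, fun j hj => by rw [hks]; exact hN (k j) (le_trans hj (le_trans (hk.le_apply) le_rfl))⟩

lemma limits_pfx (f : ℕ → ℕ) : Limits (fun n => pfx f n) f := by
  intro n
  exact ⟨n, fun j hj => by simpa using take_pfx f j n hj⟩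

/-- prefixes of the limit branch are in T -/
lemma pfx_mem_of_limits (hT : IsTree T) (hs : IsCoarseSeqT T s) {f : ℕ → ℕ}
    (h : Limits s f) (n : ℕ) : pfx f n ∈ T := by
  obtain ⟨N, hN⟩ := h n
  have := hN N le_rfl
  exact hT.2 (s N) (hs.1 N) _ (this ▸ List.take_prefix n (s N))

end CoarseBasic
/-! ### The interleaved sequence `v` -/

def walkLen (m : ℕ → ℕ) (j : ℕ) : ℕ := Nat.dist (m j) (m (j + 1))

def blockLen (m : ℕ → ℕ) (j : ℕ) : ℕ := walkLen m j + 2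

def Bsum (m : ℕ → ℕ) : ℕ → ℕ
  | 0 => 0
  | j + 1 => Bsum m j + blockLen m j

def walkVal (m : ℕ → ℕ) (j t : ℕ) : ℕ := if m j ≤ m (j + 1) then m j + t else m j - t

def blockVal (s' : ℕ → List ℕ) (f : ℕ → ℕ) (m : ℕ → ℕ) (j t : ℕ) : List ℕ :=
  if t = 0 then s' j else pfx f (walkVal m j (t - 1))

def blkIdx (m : ℕ → ℕ) (i : ℕ) : ℕ := Nat.findGreatest (fun j => Bsum m j ≤ i) i

def vSeq (s' : ℕ → List ℕ) (f : ℕ → ℕ) (m : ℕ → ℕ) (i : ℕ) : List ℕ :=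
  blockVal s' f m (blkIdx m i) (i - Bsum m (blkIdx m i))

section VSeq

variable {s' : ℕ → List ℕ} {f : ℕ → ℕ} {m : ℕ → ℕ}

lemma Bsum_lt_succ (m : ℕ → ℕ) (j : ℕ) : Bsum m j < Bsum m (j + 1) := by
  simp only [Bsum, blockLen]; omega

lemma Bsum_strictMono (m : ℕ → ℕ) : StrictMono (Bsum m) :=
  strictMono_nat_of_lt_succ (Bsum_lt_succ m)

lemma le_Bsum (m : ℕ → ℕ) (j : ℕ) : 2 * j ≤ Bsum m j := by
  induction j with
  | zero => simp [Bsum]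
  | succ j ih => simp only [Bsum, blockLen]; omega

lemma blkIdx_spec (m : ℕ → ℕ) (i : ℕ) :
    Bsum m (blkIdx m i) ≤ i ∧ i < Bsum m (blkIdx m i + 1) := by
  constructor
  · exact Nat.findGreatest_spec (P := fun j => Bsum m j ≤ i) (Nat.zero_le i) (Nat.zero_le i)
  · by_contra h
    push_neg at h
    have h2 : blkIdx m i + 1 ≤ i := le_trans (by have := le_Bsum m (blkIdx m i + 1); omega) h
    have := Nat.le_findGreatest (P := fun j => Bsum m j ≤ i) h2 h
    simp only [blkIdx] at this ⊢
    omega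

lemma blkIdx_eq (m : ℕ → ℕ) {i j : ℕ} (h1 : Bsum m j ≤ i) (h2 : i < Bsum m (j + 1)) :
    blkIdx m i = j := by
  obtain ⟨g1, g2⟩ := blkIdx_spec m i
  have a1 : blkIdx m i < j + 1 := (Bsum_strictMono m).lt_iff_lt.mp (lt_of_le_of_lt g1 h2)
  have a2 : j < blkIdx m i + 1 := (Bsum_strictMono m).lt_iff_lt.mp (lt_of_le_of_lt h1 g2)
  omega

lemma vSeq_at_block (i j : ℕ) (h1 : Bsum m j ≤ i) (h2 : i < Bsum m (j + 1)) :
    vSeq s' f m i = blockVal s' f m j (i - Bsum m j) := by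
  rw [vSeq, blkIdx_eq m h1 h2]

lemma vSeq_start (j : ℕ) : vSeq s' f m (Bsum m j) = s' j := by
  rw [vSeq_at_block _ j le_rfl (Bsum_lt_succ m j)]
  simp [blockVal]

lemma vSeq_walk (j t : ℕ) (ht : t ≤ walkLen m j) :
    vSeq s' f m (Bsum m j + t + 1) = pfx f (walkVal m j t) := by
  rw [vSeq_at_block _ j (by omega) (by simp only [Bsum, blockLen, walkLen] at *; omega)]
  have h : Bsum m j + t + 1 - Bsum m j = t + 1 := by omega
  rw [h]
  simp [blockVal]

end VSeq
/-! ### step lemmas for the agreement depth -/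

lemma treeDist_comm (x y : List ℕ) : treeDist x y = treeDist y x := by
  rw [treeDist, treeDist, cpl_comm]; omega

lemma treeDist_le_comm {x y : List ℕ} {K : ℕ} (h : treeDist x y ≤ K) :
    treeDist y x ≤ K := (treeDist_comm y x) ▸ h

lemma agree_bad_step {f : ℕ → ℕ} {x y : List ℕ} {K : ℕ} (hd : treeDist x y ≤ K)
    (hbad : agree f x + K < x.length) : agree f y = agree f x := by
  set n := agree f x with hn
  have h1 : x.length + y.length ≤ K + 2 * commonPrefixLen x y := treeDist_le_iff.mp hd
  have h2 := cpl_le_right x y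
  have hc : n + 1 ≤ commonPrefixLen x y := by omega
  have htn : y.take n = x.take n := (take_eq_of_le_cpl (by omega)).symm
  have hg1 : n ≤ agree f y := le_agree (by rw [htn]; exact take_eq_pfx_of_le_agree le_rfl)
  have hg2 : ¬ (n + 1 ≤ agree f y) := by
    intro hcon
    have e1 : y.take (n + 1) = pfx f (n + 1) := take_eq_pfx_of_le_agree hcon
    have e2 : y.take (n + 1) = x.take (n + 1) := (take_eq_of_le_cpl hc).symm
    have : n + 1 ≤ agree f x := le_agree (by rw [← e2, e1])
    omega
  omega

lemma agree_close_step {f : ℕ → ℕ} {x y : List ℕ} {K : ℕ} (hd : treeDist x y ≤ K) :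
    agree f x ≤ agree f y + K := by
  have h1 : x.length + y.length ≤ K + 2 * commonPrefixLen x y := treeDist_le_iff.mp hd
  have h2 := cpl_le_right x y
  have h3 := agree_le_length f x
  have h4 := agree_min (f := f) x y
  omega

lemma tendsto_treeDist_nil_of {a : ℕ → List ℕ} (h : ∀ n, ∃ N, ∀ j ≥ N, n ≤ (a j).length) :
    Tendsto (fun i => treeDist [] (a i)) atTop atTop := by
  apply tendsto_atTop_atTop.2
  intro b
  obtain ⟨N, hN⟩ := h b
  exact ⟨N, fun j hj => by rw [treeDist_nil]; exact hN j hj⟩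

/-- enumeration of "good times" -/
def gts {P : ℕ → Prop} [DecidablePred P] (hgood : ∀ I, ∃ i, I ≤ i ∧ P i) : ℕ → ℕ
  | 0 => Nat.find (hgood 0)
  | j + 1 => Nat.find (hgood (gts hgood j + 1))

section Gts
variable {P : ℕ → Prop} [DecidablePred P] (hgood : ∀ I, ∃ i, I ≤ i ∧ P i)

lemma gts_good (j : ℕ) : P (gts hgood j) := by
  cases j with
  | zero => exact (Nat.find_spec (hgood 0)).2
  | succ j => exact (Nat.find_spec (hgood (gts hgood j + 1))).2

lemma gts_lt_succ (j : ℕ) : gts hgood j < gts hgood (j + 1) := by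
  have := (Nat.find_spec (hgood (gts hgood j + 1))).1
  show gts hgood j < Nat.find (hgood (gts hgood j + 1))
  omega

lemma gts_strictMono : StrictMono (gts hgood) :=
  strictMono_nat_of_lt_succ (gts_lt_succ hgood)

lemma gts_not_between {j i : ℕ} (h1 : gts hgood j < i) (h2 : i < gts hgood (j + 1)) : ¬ P i := by
  intro hP
  have := Nat.find_min (hgood (gts hgood j + 1)) (show i < Nat.find (hgood (gts hgood j + 1)) from h2)
  exact this ⟨by omega, hP⟩

end Gts
lemma main_chain {T : Set (List ℕ)} (hT : IsTree T) {s : ℕ → List ℕ}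
    (hs : IsCoarseSeqT T s) {f : ℕ → ℕ} (hf : Limits s f) :
    SigmaRelT T s (fun n => pfx f n) := by
  classical
  obtain ⟨K, hK1, hK⟩ := exists_nat_bound hs
  set ℓ : ℕ → ℕ := fun i => agree f (s i) with hℓdef
  have hℓ_le : ∀ i, ℓ i ≤ (s i).length := fun i => agree_le_length f (s i)
  have hLtend : ∀ n, ∃ N, ∀ j ≥ N, n ≤ ℓ j := by
    intro n
    obtain ⟨N, hN⟩ := hf n
    exact ⟨N, fun j hj => le_agree (hN j hj)⟩
  -- good times occur unboundedly
  have hgood : ∀ I, ∃ i, I ≤ i ∧ (s i).length ≤ ℓ i + K := by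
    intro I
    by_contra hcon
    push_neg at hcon
    have hconst : ∀ d, ℓ (I + d) = ℓ I := by
      intro d
      induction d with
      | zero => rfl
      | succ d ih =>
        have hb := hcon (I + d) (by omega)
        have hstep := agree_bad_step (f := f) (hK (I + d)) hb
        have e : I + (d + 1) = (I + d) + 1 := rfl
        rw [e]
        exact hstep.trans ih
    obtain ⟨N, hN⟩ := hLtend (ℓ I + 1)
    have h1 := hN (max N I) (le_max_left _ _)
    have h2 := hconst (max N I - I)
    rw [show I + (max N I - I) = max N I by omega] at h2
    omega
  set g : ℕ → ℕ := gts hgood with hgdef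
  have hg_mono : StrictMono g := gts_strictMono hgood
  have hg_good : ∀ j, (s (g j)).length ≤ ℓ (g j) + K := fun j => gts_good hgood j
  have hg_lt : ∀ j, g j < g (j + 1) := fun j => gts_lt_succ hgood j
  have hg_between : ∀ j i, g j < i → i < g (j + 1) → ¬ ((s i).length ≤ ℓ i + K) :=
    fun j i h1 h2 => gts_not_between hgood h1 h2
  set m : ℕ → ℕ := fun j => ℓ (g j) with hmdef
  set s' : ℕ → List ℕ := fun j => s (g j) with hs'def
  have hm_agree : ∀ j, m j = agree f (s' j) := fun j => rfl
  have hm_len : ∀ j, m j ≤ (s' j).length := fun j => hℓ_le (g j)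
  have hs'_good : ∀ j, (s' j).length ≤ m j + K := fun j => hg_good j
  -- interior constancy of ℓ between consecutive good times
  have hinterior : ∀ j d, g j + 1 + d ≤ g (j + 1) → ℓ (g j + 1 + d) = ℓ (g j + 1) := by
    intro j d
    induction d with
    | zero => intro _; rfl
    | succ d ih =>
      intro hd
      have hgt : g j < g (j + 1) := hg_lt j
      have hnb : ¬ ((s (g j + 1 + d)).length ≤ ℓ (g j + 1 + d) + K) :=
        hg_between j _ (by omega) (by omega)
      have hstep := agree_bad_step (f := f) (hK (g j + 1 + d)) (Nat.lt_of_not_le hnb)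
      have e : g j + 1 + (d + 1) = (g j + 1 + d) + 1 := rfl
      rw [e]
      exact hstep.trans (ih (by omega))
  have hm_step : ∀ j, m (j + 1) ≤ m j + K ∧ m j ≤ m (j + 1) + K := by
    intro j
    have hgt : g j < g (j + 1) := hg_lt j
    have e : ℓ (g (j + 1)) = ℓ (g j + 1) := by
      have h1 := hinterior j (g (j + 1) - (g j + 1)) (by omega)
      rw [show g j + 1 + (g (j + 1) - (g j + 1)) = g (j + 1) by omega] at h1
      exact h1
    have h1' : ℓ (g j) ≤ ℓ (g j + 1) + K := agree_close_step (f := f) (hK (g j))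
    have h2' : ℓ (g j + 1) ≤ ℓ (g j) + K :=
      agree_close_step (f := f) (treeDist_le_comm (hK (g j)))
    constructor
    · show ℓ (g (j + 1)) ≤ ℓ (g j) + K
      rw [e]; omega
    · show ℓ (g j) ≤ ℓ (g (j + 1)) + K
      rw [e]; omega
  have hm_tend : ∀ n, ∃ J, ∀ j ≥ J, n ≤ m j := by
    intro n
    obtain ⟨N, hN⟩ := hLtend n
    exact ⟨N, fun j hj => hN (g j) (le_trans hj hg_mono.le_apply)⟩
  have htake_m : ∀ j (n : ℕ), n ≤ m j → (s' j).take n = pfx f n := by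
    intro j n hn
    exact take_eq_pfx_of_le_agree (by rw [← hm_agree]; exact hn)
  -- s' is coarse
  have hs'_coarse : IsCoarseSeqT T s' := by
    refine ⟨fun j => hs.1 (g j), ⟨(3 * K : ℕ), fun j => ?_⟩, tendsto_treeDist_nil_of ?_⟩
    · have hcmin : min (m j) (m (j + 1)) ≤ commonPrefixLen (s' j) (s' (j + 1)) := by
        apply le_cpl
        · rw [htake_m j _ (min_le_left _ _), htake_m (j + 1) _ (min_le_right _ _)]
        · exact le_trans (min_le_left _ _) (hm_len j)
      have hd : treeDist (s' j) (s' (j + 1)) ≤ 3 * K := by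
        rw [treeDist_le_iff]
        have h1 := hs'_good j
        have h2 := hs'_good (j + 1)
        have h3 := hm_step j
        omega
      exact_mod_cast hd
    · intro n
      obtain ⟨J, hJ⟩ := hm_tend n
      exact ⟨J, fun j hj => le_trans (hJ j hj) (hm_len j)⟩
  -- the interleaved sequence v
  set v : ℕ → List ℕ := vSeq s' f m with hvdef
  have hpfx_mem : ∀ n, pfx f n ∈ T := pfx_mem_of_limits hT hs hf
  have hv_mem : ∀ i, v i ∈ T := by
    intro i
    rw [hvdef, vSeq, blockVal]
    split
    · exact hs.1 (g _)
    · exact hpfx_mem _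
  have hwalk_le : ∀ j t, t ≤ walkLen m j → m (j + 1) ≤ m j + K ∧ m j ≤ m (j + 1) + K →
      min (m j) (m (j + 1)) ≤ walkVal m j t ∧
        walkVal m j t ≤ max (m j) (m (j + 1)) := by
    intro j t ht hst
    rw [walkVal]
    simp only [walkLen, Nat.dist] at ht
    split <;> omega
  -- distance from s'-nodes to branch prefixes
  have hdist_s'_pfx : ∀ j, treeDist (s' j) (pfx f (m j)) ≤ K := by
    intro j
    rw [treeDist_pfx_right (by rw [← hm_agree])]
    have := hs'_good j
    omega
  have hwalk_end : ∀ j, walkVal m j (walkLen m j) = m (j + 1) := by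
    intro j
    rw [walkVal]
    simp only [walkLen, Nat.dist]
    split <;> omega
  have hwalk_zero : ∀ j, walkVal m j 0 = m j := by
    intro j
    rw [walkVal]; split <;> omega
  -- v is coarse
  have hv_step : ∀ i, treeDist (v i) (v (i + 1)) ≤ K := by
    intro i
    obtain ⟨hsp1, hsp2⟩ := blkIdx_spec m i
    set j := blkIdx m i with hjdef
    have hBsucc : Bsum m (j + 1) = Bsum m j + walkLen m j + 2 := by
      simp only [Bsum, blockLen]; omega
    set t := i - Bsum m j with htdef
    have hit : i = Bsum m j + t := by omega
    by_cases hend : i + 1 = Bsum m (j + 1)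
    · have ht : t = walkLen m j + 1 := by omega
      have hvi : v i = pfx f (m (j + 1)) := by
        rw [hvdef, show i = Bsum m j + walkLen m j + 1 by omega]
        rw [show Bsum m j + walkLen m j + 1 = Bsum m j + (walkLen m j) + 1 by omega]
        rw [vSeq_walk _ _ le_rfl, hwalk_end j]
      have hvi1 : v (i + 1) = s' (j + 1) := by
        rw [hvdef, hend, vSeq_start]
      rw [hvi, hvi1, treeDist_comm, treeDist_pfx_right (by rw [← hm_agree])]
      have := hs'_good (j + 1)
      omega
    · have hlt : i + 1 < Bsum m (j + 1) := by omega
      by_cases ht0 : t = 0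
      · have hvi : v i = s' j := by
          rw [hvdef, show i = Bsum m j by omega, vSeq_start]
        have hvi1 : v (i + 1) = pfx f (m j) := by
          rw [hvdef, show i + 1 = Bsum m j + 0 + 1 by omega,
            vSeq_walk _ _ (Nat.zero_le _), hwalk_zero j]
        rw [hvi, hvi1]
        exact hdist_s'_pfx j
      · have ht1 : 1 ≤ t := by omega
        have htw : t ≤ walkLen m j := by omega
        have hvi : v i = pfx f (walkVal m j (t - 1)) := by
          rw [hvdef, show i = Bsum m j + (t - 1) + 1 by omega, vSeq_walk _ _ (by omega)]
        have hvi1 : v (i + 1) = pfx f (walkVal m j t) := by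
          rw [hvdef, show i + 1 = Bsum m j + t + 1 by omega, vSeq_walk _ _ htw]
        rw [hvi, hvi1]
        by_cases hup : m j ≤ m (j + 1)
        · have e1 : walkVal m j (t - 1) = m j + (t - 1) := by rw [walkVal, if_pos hup]
          have e2 : walkVal m j t = m j + t := by rw [walkVal, if_pos hup]
          rw [e1, e2, treeDist_pfx_pfx f _ _ (by omega)]
          omega
        · have hwl : walkLen m j = m j - m (j + 1) := by
            simp only [walkLen, Nat.dist]; omega
          have e1 : walkVal m j (t - 1) = m j - (t - 1) := by rw [walkVal, if_neg hup]
          have e2 : walkVal m j t = m j - t := by rw [walkVal, if_neg hup]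
          rw [e1, e2, treeDist_comm, treeDist_pfx_pfx f _ _ (by omega)]
          omega
  have hv_len : ∀ i, min (m (blkIdx m i)) (m (blkIdx m i + 1)) ≤ (v i).length := by
    intro i
    obtain ⟨hsp1, hsp2⟩ := blkIdx_spec m i
    set j := blkIdx m i with hjdef
    have hBsucc : Bsum m (j + 1) = Bsum m j + walkLen m j + 2 := by
      simp only [Bsum, blockLen]; omega
    set t := i - Bsum m j with htdef
    by_cases ht0 : t = 0
    · have hvi : v i = s' j := by rw [hvdef, show i = Bsum m j by omega, vSeq_start]
      rw [hvi]
      exact le_trans (min_le_left _ _) (hm_len j)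
    · have htw : t - 1 ≤ walkLen m j := by omega
      have hvi : v i = pfx f (walkVal m j (t - 1)) := by
        rw [hvdef, show i = Bsum m j + (t - 1) + 1 by omega, vSeq_walk _ _ htw]
      rw [hvi, length_pfx]
      exact (hwalk_le j (t - 1) htw (hm_step j)).1
  have hv_coarse : IsCoarseSeqT T v := by
    refine ⟨hv_mem, ⟨(K : ℕ), fun i => by exact_mod_cast hv_step i⟩,
      tendsto_treeDist_nil_of ?_⟩
    intro n
    obtain ⟨J, hJ⟩ := hm_tend n
    refine ⟨Bsum m J, fun i hi => ?_⟩
    have hblk : J ≤ blkIdx m i := by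
      obtain ⟨hsp1, hsp2⟩ := blkIdx_spec m i
      by_contra hcon
      push_neg at hcon
      have h1 : Bsum m (blkIdx m i + 1) ≤ Bsum m J :=
        (Bsum_strictMono m).le_iff_le.mpr (by omega)
      omega
    refine le_trans ?_ (hv_len i)
    exact le_min (hJ _ hblk) (hJ _ (by omega))
  -- the tail prefix sequence q
  set q : ℕ → List ℕ := fun x => pfx f (m 0 + x) with hqdef
  have hq_coarse : IsCoarseSeqT T q := by
    refine ⟨fun x => hpfx_mem _, ⟨(1 : ℕ), fun x => ?_⟩, tendsto_treeDist_nil_of ?_⟩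
    · show (treeDist (pfx f (m 0 + x)) (pfx f (m 0 + (x + 1))) : ℝ) ≤ ((1 : ℕ) : ℝ)
      rw [treeDist_pfx_pfx f _ _ (by omega),
        show m 0 + (x + 1) - (m 0 + x) = 1 by omega]
    · intro n
      exact ⟨n, fun x hx => by
        show n ≤ (pfx f (m 0 + x)).length
        rw [length_pfx]; omega⟩
  -- p, the full prefix sequence, is coarse
  have hp_coarse : IsCoarseSeqT T (fun n => pfx f n) := by
    refine ⟨fun n => hpfx_mem n, ⟨(1 : ℕ), fun n => ?_⟩, tendsto_treeDist_nil_of ?_⟩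
    · show (treeDist (pfx f n) (pfx f (n + 1)) : ℝ) ≤ ((1 : ℕ) : ℝ)
      rw [treeDist_pfx_pfx f _ _ (by omega), show n + 1 - n = 1 by omega]
    · intro n
      exact ⟨n, fun x hx => by
        show n ≤ (pfx f x).length
        rw [length_pfx]; omega⟩
  -- subsequence relations
  have hsub1 : IsSubseq s' s := ⟨g, hg_mono, fun j => rfl⟩
  have hsub2 : IsSubseq s' v := ⟨Bsum m, Bsum_strictMono m, fun j => (vSeq_start j).symm⟩
  have hsub4 : IsSubseq q (fun n => pfx f n) :=
    ⟨fun x => m 0 + x, fun a b hab => Nat.add_lt_add_left hab (m 0), fun x => rfl⟩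
  -- q is a subsequence of v
  have hex : ∀ level : ℕ, ∃ j, level ≤ m j := by
    intro level
    obtain ⟨J, hJ⟩ := hm_tend level
    exact ⟨J, hJ J le_rfl⟩
  set Jf : ℕ → ℕ := fun level => Nat.find (hex level) with hJfdef
  have hJf_spec : ∀ level, level ≤ m (Jf level) := fun level => Nat.find_spec (hex level)
  have hJf_min : ∀ level k, k < Jf level → m k < level := by
    intro level k hk
    have := Nat.find_min (hex level) hk
    omega
  have hJf_mono : ∀ level, Jf level ≤ Jf (level + 1) := by
    intro level
    apply Nat.find_min'
    exact le_trans (by omega) (hJf_spec (level + 1))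
  set h : ℕ → ℕ := fun x => if x = 0 then 1 else
    Bsum m (Jf (m 0 + x) - 1) + ((m 0 + x) - m (Jf (m 0 + x) - 1)) + 1 with hhdef
  have hJf_pos : ∀ x : ℕ, 1 ≤ x → 1 ≤ Jf (m 0 + x) := by
    intro x hx
    by_contra hcon
    push_neg at hcon
    have h0 : Jf (m 0 + x) = 0 := by omega
    have := hJf_spec (m 0 + x)
    rw [h0] at this
    omega
  have hval : ∀ x : ℕ, 1 ≤ x → v (h x) = pfx f (m 0 + x) := by
    intro x hx
    set level := m 0 + x with hlev
    have hj1 : 1 ≤ Jf level := hJf_pos x hx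
    set j := Jf level - 1 with hjd
    have hjsucc : j + 1 = Jf level := by omega
    have hlow : m j < level := hJf_min level j (by omega)
    have hhigh : level ≤ m (j + 1) := by rw [hjsucc]; exact hJf_spec level
    have hup : m j ≤ m (j + 1) := by omega
    have hwl : walkLen m j = m (j + 1) - m j := by
      simp only [walkLen, Nat.dist]; omega
    have htw : level - m j ≤ walkLen m j := by omega
    have e : v (Bsum m j + (level - m j) + 1) = pfx f (walkVal m j (level - m j)) :=
      vSeq_walk _ _ htw
    have e2 : walkVal m j (level - m j) = level := by
      rw [walkVal, if_pos hup]; omega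
    have e3 : h x = Bsum m j + (level - m j) + 1 := by
      rw [hhdef]; simp only [if_neg (by omega : ¬ x = 0)]; rfl
    rw [e3, e, e2]
  have hmono : StrictMono h := by
    apply strictMono_nat_of_lt_succ
    intro x
    by_cases hx0 : x = 0
    · subst hx0
      have hj1 : 1 ≤ Jf (m 0 + 1) := hJf_pos 1 le_rfl
      set j := Jf (m 0 + 1) - 1 with hjd
      have hlow : m j < m 0 + 1 := hJf_min (m 0 + 1) j (by omega)
      have h0 : h 0 = 1 := by rw [hhdef]; simp
      have h1 : h 1 = Bsum m j + ((m 0 + 1) - m j) + 1 := by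
        rw [hhdef]; simp only [if_neg (by omega : ¬ (1:ℕ) = 0)]; rfl
      rw [h0, h1]
      have : 1 ≤ (m 0 + 1) - m j ∨ True := Or.inr trivial
      omega
    · have hx : 1 ≤ x := by omega
      set level := m 0 + x with hlev
      have hj1 : 1 ≤ Jf level := hJf_pos x hx
      have hj1' : 1 ≤ Jf (level + 1) := by
        have := hJf_pos (x + 1) (by omega)
        rw [show m 0 + (x + 1) = level + 1 by omega] at this
        exact this
      have hmon := hJf_mono level
      have e1 : h x = Bsum m (Jf level - 1) + (level - m (Jf level - 1)) + 1 := by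
        rw [hhdef]; simp only [if_neg (by omega : ¬ x = 0)]; rfl
      have e2 : h (x + 1) = Bsum m (Jf (level + 1) - 1) + ((level + 1) - m (Jf (level + 1) - 1)) + 1 := by
        rw [hhdef]
        simp only [if_neg (by omega : ¬ x + 1 = 0), show m 0 + (x + 1) = level + 1 by omega]
      by_cases heq : Jf (level + 1) = Jf level
      · rw [e1, e2, heq]
        have hlow : m (Jf level - 1) < level := hJf_min level _ (by omega)
        omega
      · have hlt : Jf level < Jf (level + 1) := by omega
        set j := Jf level - 1 with hjd
        set j' := Jf (level + 1) - 1 with hjd'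
        have hjj' : j + 1 ≤ j' := by omega
        have hlow : m j < level := hJf_min level j (by omega)
        have hhigh : level ≤ m (j + 1) := by
          rw [show j + 1 = Jf level by omega]; exact hJf_spec level
        have hwl : walkLen m j = m (j + 1) - m j := by
          simp only [walkLen, Nat.dist]; omega
        have hBsucc : Bsum m (j + 1) = Bsum m j + walkLen m j + 2 := by
          simp only [Bsum, blockLen]; omega
        have hBmono : Bsum m (j + 1) ≤ Bsum m j' :=
          (Bsum_strictMono m).le_iff_le.mpr hjj'
        rw [e1, e2]
        omega
  have hsub3 : IsSubseq q v := by
    refine ⟨h, hmono, fun x => ?_⟩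
    by_cases hx0 : x = 0
    · subst hx0
      have e : h 0 = 1 := by rw [hhdef]; simp
      have e2 : v (Bsum m 0 + 0 + 1) = pfx f (walkVal m 0 0) := vSeq_walk _ _ (Nat.zero_le _)
      have e3 : Bsum m 0 + 0 + 1 = 1 := by simp [Bsum]
      show pfx f (m 0 + 0) = v (h 0)
      rw [e]
      rw [e3] at e2
      rw [e2, hwalk_zero 0, Nat.add_zero]
    · exact (hval x (by omega)).symm
  -- assemble the chain
  refine ⟨4, fun i => match i with
    | 0 => s
    | 1 => s'
    | 2 => v
    | 3 => q
    | (n + 4) => fun n => pfx f n, rfl, rfl, ?_, ?_⟩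
  · intro i hi
    interval_cases i
    · exact hs
    · exact hs'_coarse
    · exact hv_coarse
    · exact hq_coarse
    · exact hp_coarse
  · intro i hi
    interval_cases i
    · exact Or.inr hsub1
    · exact Or.inl hsub2
    · exact Or.inr hsub3
    · exact Or.inl hsub4
lemma sigmaRelT_symm {T : Set (List ℕ)} {s t : ℕ → List ℕ} (h : SigmaRelT T s t) :
    SigmaRelT T t s := by
  obtain ⟨n, u, h0, hn, hc, hsub⟩ := h
  refine ⟨n, fun i => u (n - i), by simpa using hn, by simpa using h0, ?_, ?_⟩
  · intro i hi
    exact hc (n - i) (by omega)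
  · intro i hi
    have e1 : n - i = (n - (i + 1)) + 1 := by omega
    show IsSubseq (u (n - i)) (u (n - (i + 1))) ∨ IsSubseq (u (n - (i + 1))) (u (n - i))
    rw [e1]
    exact (hsub (n - (i + 1)) (by omega)).symm

lemma pfx_coarse {T : Set (List ℕ)} {f : ℕ → ℕ} (hmem : ∀ n, pfx f n ∈ T) :
    IsCoarseSeqT T (fun n => pfx f n) := by
  refine ⟨hmem, ⟨(1 : ℕ), fun n => ?_⟩, tendsto_treeDist_nil_of ?_⟩
  · show (treeDist (pfx f n) (pfx f (n + 1)) : ℝ) ≤ ((1 : ℕ) : ℝ)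
    rw [treeDist_pfx_pfx f _ _ (by omega), show n + 1 - n = 1 by omega]
  · intro n
    exact ⟨n, fun x hx => by
      show n ≤ (pfx f x).length
      rw [length_pfx]; omega⟩

noncomputable def limB {T : Set (List ℕ)} (s : ℕ → List ℕ) (hs : IsCoarseSeqT T s) : ℕ → ℕ :=
  Classical.choose (exists_limits hs)

lemma limB_spec {T : Set (List ℕ)} (s : ℕ → List ℕ) (hs : IsCoarseSeqT T s) :
    Limits s (limB s hs) :=
  Classical.choose_spec (exists_limits hs)

lemma limB_eq_of_rel {T : Set (List ℕ)} {s t : ℕ → List ℕ} (h : SigmaRelT T s t)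
    (hs : IsCoarseSeqT T s) (ht : IsCoarseSeqT T t) : limB s hs = limB t ht := by
  obtain ⟨n, u, h0, hn, hc, hsub⟩ := h
  have key : ∀ i ≤ n, Limits (u i) (limB s hs) := by
    intro i
    induction i with
    | zero => intro _; rw [h0]; exact limB_spec s hs
    | succ i ih =>
      intro hi
      have hui := ih (by omega)
      rcases hsub i (by omega) with hss | hss
      · obtain ⟨f', hf'⟩ := exists_limits (hc (i + 1) hi)
        have h1 : Limits (u i) f' := limits_subseq hss hf'
        have h2 : f' = limB s hs := limits_unique h1 hui
        rw [← h2]; exact hf'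
      · exact limits_subseq hss hui
  have h1 : Limits t (limB s hs) := hn ▸ key n le_rfl
  exact limits_unique (limB_spec t ht) h1 |>.symm

theorem sigmaQuot_equiv_branches' (T : Set (List ℕ)) (hT : IsTree T) :
    Nonempty (SigmaQuotT T ≃ Branch T) := by
  classical
  have hlim_mem : ∀ (s : CoarseSeqT T) (n : ℕ),
      (List.ofFn fun i : Fin n => limB s.1 s.2 i.1) ∈ T := by
    intro s n
    exact pfx_mem_of_limits hT s.2 (limB_spec s.1 s.2) n
  refine ⟨⟨Quot.lift (fun s : CoarseSeqT T => (⟨limB s.1 s.2, hlim_mem s⟩ : Branch T))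
      (fun a b hab => Subtype.ext (limB_eq_of_rel hab a.2 b.2)),
    fun f => Quot.mk _ (⟨fun n => pfx f.1 n, pfx_coarse (fun n => f.2 n)⟩ : CoarseSeqT T),
    ?_, ?_⟩⟩
  · intro q
    induction q using Quot.ind with
    | _ s =>
      apply Quot.sound
      show SigmaRelT T (fun n => pfx (limB s.1 s.2) n) s.1
      exact sigmaRelT_symm (main_chain hT s.2 (limB_spec s.1 s.2))
  · intro f
    apply Subtype.ext
    exact limits_unique (limB_spec (T := T) (fun n => pfx f.1 n) (pfx_coarse fun n => f.2 n)) (limits_pfx f.1)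

/-- for a finitely branching rooted tree `T` with the tree metric,
`σ(T, root)` is equipotent to the set `[T]` of infinite branches of `T`. -/
theorem sigmaQuot_equiv_branches (T : Set (List ℕ)) (hT : IsTree T)
    (hfb : FinitelyBranching T) :
    Nonempty (SigmaQuotT T ≃ Branch T) := by
  exact sigmaQuot_equiv_branches' T hT
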